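/- (Stability of the partially invariant feature, singleton case) Suppose G_0 = {g₀} consists of a single element, each η_n is Lipschitz continuous with constant L_{η_n}, L_η = max_n L_{η_n} satisfies N·L_η ≤ 1/√2, k(z, z) = 1 for all z ∈ E, and each template satisfies k(t^k, t^k) = 1. Then for all x, x' ∈ E, (1/K) Σ_{k=1}^K Σ_{n=1}^N (Υ̂^k_n(x) − Υ̂^k_n(x'))² ≤ 1 − k(x, x'), where Υ̂^k_n(z) = (1/|G_0|) Σ_{g ∈ G_0} η_n(⟨φ(z), φ(g t^k)⟩). -/

import Mathlib

open RealInnerProductSpace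

/-- Stability of the partially invariant feature, singleton case: if
`G₀ = {g₀}`, each `η_n` is Lipschitz with constant `L_{η_n}`, `L_η = max_n L_{η_n}`
satisfies `N·L_η ≤ 1/√2`, `k(z,z) = 1` for all `z`, and each template satisfies
`k(t^k, t^k) = 1`, then `(1/K) Σ_k Σ_n (Υ̂^k_n(x) − Υ̂^k_n(x'))² ≤ 1 − k(x,x')`. -/
theorem partial_feature_stability_singleton
    {E : Type*} [NormedAddCommGroup E] [InnerProductSpace ℝ E]
    {G : Type*} [Group G] [Fintype G] (G₀ : Finset G)
    {H : Type*} [NormedAddCommGroup H] [InnerProductSpace ℝ H] [CompleteSpace H]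
    (ρ : G →* (E ≃ₗᵢ[ℝ] E))
    (φ : E → H)
    (hunitary : ∀ (g : G) (x y : E), ⟪φ (ρ g x), φ (ρ g y)⟫ = ⟪φ x, φ y⟫)
    (K N : ℕ) (t : Fin K → E) (η : Fin N → ℝ → ℝ)
    (Υhat : Fin K → Fin N → E → ℝ)
    (hΥhat : ∀ (k : Fin K) (n : Fin N) (z : E),
      Υhat k n z = (G₀.card : ℝ)⁻¹ * ∑ g ∈ G₀, η n ⟪φ z, φ (ρ g (t k))⟫)
    (g₀ : G) (hG₀ : G₀ = {g₀})
    (L : Fin N → NNReal) (hL : ∀ n, LipschitzWith (L n) (η n))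
    (Lη : NNReal) (hLη : Lη = Finset.univ.sup L)
    (hNL : (N : ℝ) * (Lη : ℝ) ≤ 1 / Real.sqrt 2)
    (hnorm : ∀ z : E, ⟪φ z, φ z⟫ = 1)
    (htk : ∀ k : Fin K, ⟪φ (t k), φ (t k)⟫ = 1) :
    ∀ x x' : E,
      (K : ℝ)⁻¹ * ∑ k, ∑ n, (Υhat k n x - Υhat k n x') ^ 2 ≤ 1 - ⟪φ x, φ x'⟫ := by
  intro x x'
  have hnorm1 : ∀ z : E, ‖φ z‖ = 1 := by
    intro z
    have h := hnorm z
    rw [real_inner_self_eq_norm_sq] at h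
    nlinarith [norm_nonneg (φ z)]
  set c : ℝ := ⟪φ x, φ x'⟫ with hc
  have hc1 : c ≤ 1 := by
    have := real_inner_le_norm (φ x) (φ x')
    rw [hnorm1 x, hnorm1 x'] at this
    simpa using this
  have hDsq : ‖φ x - φ x'‖ ^ 2 = 2 - 2 * c := by
    rw [norm_sub_sq_real, hnorm1 x, hnorm1 x']; ring
  have hsum_n : ∀ k : Fin K, ∑ n, (Υhat k n x - Υhat k n x') ^ 2 ≤ 1 - c := by
    intro k
    rcases Nat.eq_zero_or_pos N with hN | hN
    · subst hN; simp [hc]; linarith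
    have hterm : ∀ n : Fin N,
        (Υhat k n x - Υhat k n x') ^ 2 ≤ (Lη : ℝ) ^ 2 * (2 - 2 * c) := by
      intro n
      have hx := hΥhat k n x
      have hx' := hΥhat k n x'
      rw [hG₀] at hx hx'
      simp [Finset.sum_singleton] at hx hx'
      set w := φ (ρ g₀ (t k)) with hw
      have hdiff : Υhat k n x - Υhat k n x' = η n ⟪φ x, w⟫ - η n ⟪φ x', w⟫ := by
        rw [hx, hx']
      have hlip : |η n ⟪φ x, w⟫ - η n ⟪φ x', w⟫| ≤ (L n : ℝ) * |⟪φ x, w⟫ - ⟪φ x', w⟫| := by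
        have := (hL n).dist_le_mul ⟪φ x, w⟫ ⟪φ x', w⟫
        simpa [Real.dist_eq] using this
      have hinner : ⟪φ x, w⟫ - ⟪φ x', w⟫ = ⟪φ x - φ x', w⟫ := by
        rw [inner_sub_left]
      have hcs : |⟪φ x - φ x', w⟫| ≤ ‖φ x - φ x'‖ := by
        have := abs_real_inner_le_norm (φ x - φ x') w
        rw [hnorm1 (ρ g₀ (t k))] at this
        simpa using this
      have hLle : (L n : ℝ) ≤ (Lη : ℝ) := by
        rw [hLη]
        exact_mod_cast Finset.le_sup (Finset.mem_univ n)
      have h1 : |Υhat k n x - Υhat k n x'| ≤ (Lη : ℝ) * ‖φ x - φ x'‖ := by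
        rw [hdiff]
        calc |η n ⟪φ x, w⟫ - η n ⟪φ x', w⟫| ≤ (L n : ℝ) * |⟪φ x, w⟫ - ⟪φ x', w⟫| := hlip
          _ ≤ (Lη : ℝ) * ‖φ x - φ x'‖ := by
              rw [hinner]
              exact mul_le_mul hLle hcs (abs_nonneg _) Lη.coe_nonneg
      have h2 : (Υhat k n x - Υhat k n x') ^ 2 ≤ ((Lη : ℝ) * ‖φ x - φ x'‖) ^ 2 := by
        rw [← sq_abs]
        exact pow_le_pow_left₀ (abs_nonneg _) h1 2
      calc (Υhat k n x - Υhat k n x') ^ 2 ≤ ((Lη : ℝ) * ‖φ x - φ x'‖) ^ 2 := h2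
        _ = (Lη : ℝ) ^ 2 * (2 - 2 * c) := by rw [mul_pow, hDsq]
    have hsum : ∑ n, (Υhat k n x - Υhat k n x') ^ 2 ≤ (N : ℝ) * ((Lη : ℝ) ^ 2 * (2 - 2 * c)) := by
      calc ∑ n, (Υhat k n x - Υhat k n x') ^ 2
          ≤ ∑ _n : Fin N, (Lη : ℝ) ^ 2 * (2 - 2 * c) :=
            Finset.sum_le_sum fun n _ => hterm n
        _ = (N : ℝ) * ((Lη : ℝ) ^ 2 * (2 - 2 * c)) := by
            simp [Finset.sum_const, mul_comm]
    have hN1 : (1 : ℝ) ≤ (N : ℝ) := by exact_mod_cast hN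
    have hs2 : Real.sqrt 2 > 0 := Real.sqrt_pos.mpr (by norm_num)
    have hs2sq : Real.sqrt 2 ^ 2 = 2 := Real.sq_sqrt (by norm_num)
    have hL0 : (0:ℝ) ≤ (Lη : ℝ) := Lη.coe_nonneg
    have hkey : 2 * (N : ℝ) * (Lη : ℝ) ^ 2 ≤ 1 := by
      have h3 : (N : ℝ) * (Lη : ℝ) * Real.sqrt 2 ≤ 1 := by
        have h := mul_le_mul_of_nonneg_right hNL hs2.le
        rwa [one_div, inv_mul_cancel₀ hs2.ne'] at h
      have h0 : (0:ℝ) ≤ (N : ℝ) * (Lη : ℝ) * Real.sqrt 2 :=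
        mul_nonneg (mul_nonneg (Nat.cast_nonneg N) hL0) hs2.le
      have h4 : 2 * (N:ℝ)^2 * (Lη:ℝ)^2 ≤ 1 := by nlinarith [h3, h0, hs2sq]
      nlinarith [h4, hN1, hL0, sq_nonneg (Lη:ℝ),
        mul_nonneg (mul_nonneg (Nat.cast_nonneg N : (0:ℝ) ≤ N) (by linarith : (0:ℝ) ≤ (N:ℝ) - 1)) (sq_nonneg (Lη:ℝ))]
    calc ∑ n, (Υhat k n x - Υhat k n x') ^ 2
        ≤ (N : ℝ) * ((Lη : ℝ) ^ 2 * (2 - 2 * c)) := hsum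
      _ = (2 * (N : ℝ) * (Lη : ℝ) ^ 2) * (1 - c) := by ring
      _ ≤ 1 * (1 - c) := by
          apply mul_le_mul_of_nonneg_right hkey; linarith
      _ = 1 - c := by ring
  rcases Nat.eq_zero_or_pos K with hK | hK
  · subst hK; simp; linarith
  have hK1 : (0 : ℝ) < (K : ℝ) := by exact_mod_cast hK
  have : ∑ k, ∑ n, (Υhat k n x - Υhat k n x') ^ 2 ≤ (K : ℝ) * (1 - c) := by
    calc ∑ k, ∑ n, (Υhat k n x - Υhat k n x') ^ 2
        ≤ ∑ _k : Fin K, (1 - c) := Finset.sum_le_sum fun k _ => hsum_n k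
      _ = (K : ℝ) * (1 - c) := by simp [Finset.sum_const, mul_comm]; ring
  rw [inv_mul_le_iff₀ hK1]
  linarith [this]
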